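/- arXiv:2002.03356 — 9 statements merged into one kernel-verified Lean document; each statement's English description precedes it below -/
import Mathlib

section
/- Let (Ω, 𝔄, ℙ) be a probability space, 𝔰₁, …, 𝔰_n events, 𝔱 an event with ℙ(𝔱) > 0, and let α, β be finite collections of nonempty subsets of {1,…,n} with α ⪯ β (i.e., for every 𝐛 ∈ β there exists 𝐚 ∈ α with 𝐚 ⊆ 𝐛). Write E(α) := ⋃_{𝐚∈α} ⋂_{i∈𝐚} 𝔰_i and assume ℙ(𝔱 ∩ E(β)) > 0. Then the informative and misinformative shared information increase monotonically along the redundancy lattice: log₂(1/ℙ(E(α))) ≤ log₂(1/ℙ(E(β))) and log₂(ℙ(𝔱)/ℙ(𝔱 ∩ E(α))) ≤ log₂(ℙ(𝔱)/ℙ(𝔱 ∩ E(β))). -/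
open MeasureTheory Real

theorem shared_info_monotone_on_redundancy_lattice
    {Ω : Type*} [MeasurableSpace Ω] (ℙ : Measure Ω) [IsProbabilityMeasure ℙ]
    (n : ℕ) (s : Fin n → Set Ω) (t : Set Ω)
    (α β : Finset (Finset (Fin n)))
    (hα : ∀ a ∈ α, a.Nonempty) (hβ : ∀ b ∈ β, b.Nonempty)
    (hord : ∀ b ∈ β, ∃ a ∈ α, a ⊆ b)
    (ht : 0 < ℙ t)
    (htβ : 0 < ℙ (t ∩ ⋃ b ∈ β, ⋂ i ∈ b, s i)) :
    logb 2 (1 / (ℙ (⋃ a ∈ α, ⋂ i ∈ a, s i)).toReal)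
        ≤ logb 2 (1 / (ℙ (⋃ b ∈ β, ⋂ i ∈ b, s i)).toReal) ∧
    logb 2 ((ℙ t).toReal / (ℙ (t ∩ ⋃ a ∈ α, ⋂ i ∈ a, s i)).toReal)
        ≤ logb 2 ((ℙ t).toReal / (ℙ (t ∩ ⋃ b ∈ β, ⋂ i ∈ b, s i)).toReal) := by
  set Eα := ⋃ a ∈ α, ⋂ i ∈ a, s i with hEα
  set Eβ := ⋃ b ∈ β, ⋂ i ∈ b, s i with hEβ
  have hsub : Eβ ⊆ Eα := by
    intro ω hω
    rw [Set.mem_iUnion₂] at hω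
    obtain ⟨b, hb, hωb⟩ := hω
    obtain ⟨a, ha, hab⟩ := hord b hb
    rw [Set.mem_iUnion₂]
    refine ⟨a, ha, ?_⟩
    simp only [Set.mem_iInter] at hωb ⊢
    exact fun i hi => hωb i (hab hi)
  have hβpos : 0 < ℙ Eβ := lt_of_lt_of_le htβ (measure_mono Set.inter_subset_right)
  have hαpos : 0 < ℙ Eα := lt_of_lt_of_le hβpos (measure_mono hsub)
  have hne : ∀ A : Set Ω, ℙ A ≠ ⊤ := fun A => measure_ne_top ℙ A
  have htαpos : 0 < ℙ (t ∩ Eα) :=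
    lt_of_lt_of_le htβ (measure_mono (Set.inter_subset_inter_right _ hsub))
  have h1 : (ℙ Eβ).toReal ≤ (ℙ Eα).toReal :=
    ENNReal.toReal_mono (hne _) (measure_mono hsub)
  have h2 : (ℙ (t ∩ Eβ)).toReal ≤ (ℙ (t ∩ Eα)).toReal :=
    ENNReal.toReal_mono (hne _) (measure_mono (Set.inter_subset_inter_right _ hsub))
  have hβr : 0 < (ℙ Eβ).toReal := ENNReal.toReal_pos hβpos.ne' (hne _)
  have hαr : 0 < (ℙ Eα).toReal := ENNReal.toReal_pos hαpos.ne' (hne _)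
  have htβr : 0 < (ℙ (t ∩ Eβ)).toReal := ENNReal.toReal_pos htβ.ne' (hne _)
  have htαr : 0 < (ℙ (t ∩ Eα)).toReal := ENNReal.toReal_pos htαpos.ne' (hne _)
  have htr : 0 < (ℙ t).toReal := ENNReal.toReal_pos ht.ne' (hne _)
  constructor
  · exact logb_le_logb_of_le one_lt_two (by positivity)
      (one_div_le_one_div_of_le hβr h1)
  · exact logb_le_logb_of_le one_lt_two (by positivity)
      (div_le_div_of_nonneg_left htr.le htβr h2)
end

section
/- Let L be a finite lattice and let f, π : L → ℝ satisfy f(a) = Σ_{b ≤ a} π(b) for all a ∈ L. For α ∈ L let α⁻ denote the set of elements of L covered by α (i.e., the maximal elements strictly below α). Then for every α ∈ L: π(α) = f(α) − Σ_{∅ ≠ B ⊆ α⁻} (−1)^{|B|−1} f(⋀B), where ⋀B denotes the infimum in L of the nonempty set B. -/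
open scoped Classical in
theorem moebius_inversion_on_finite_lattice
    {L : Type*} [Lattice L] [Fintype L]
    (f π : L → ℝ)
    (h : ∀ a : L, f a = ∑ b ∈ Finset.univ.filter (· ≤ a), π b)
    (α : L) :
    π α = f α -
      ∑ B ∈ ((Finset.univ.filter (· ⋖ α)).powerset.filter Finset.Nonempty).attach,
        (-1 : ℝ) ^ (B.1.card - 1) *
          f (B.1.inf' (Finset.mem_filter.mp B.2).2 id) := by
  classical
  set S : Finset L := Finset.univ.filter (· ⋖ α) with hS
  set g : Finset L → ℝ := fun B =>
    if hB : B.Nonempty then (-1 : ℝ) ^ (B.card - 1) * f (B.inf' hB id) else 0 with hg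
  have hsum : ∑ B ∈ (S.powerset.filter Finset.Nonempty).attach,
      (-1 : ℝ) ^ (B.1.card - 1) * f (B.1.inf' (Finset.mem_filter.mp B.2).2 id)
      = ∑ B ∈ S.powerset.filter Finset.Nonempty, g B := by
    rw [← Finset.sum_attach (S.powerset.filter Finset.Nonempty) g]
    refine Finset.sum_congr rfl fun B _ => ?_
    have hB := (Finset.mem_filter.mp B.2).2
    simp [hg, hB]
  rw [hsum]
  have hgs : ∑ B ∈ S.powerset.filter Finset.Nonempty, g B = ∑ B ∈ S.powerset, g B := by
    rw [Finset.sum_filter]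
    refine Finset.sum_congr rfl fun B _ => ?_
    by_cases hB : B.Nonempty <;> simp [hg, hB]
  rw [hgs]
  have key : ∑ B ∈ S.powerset, g B
      = ∑ b ∈ Finset.univ.filter (· < α), π b := by
    have step1 : ∀ B ∈ S.powerset, g B
        = ∑ b : L, (if B.Nonempty then (-1 : ℝ) ^ (B.card - 1) else 0)
            * (if ∀ γ ∈ B, b ≤ γ then π b else 0) := by
      intro B _
      by_cases hB : B.Nonempty
      · simp only [hg, dif_pos hB, if_pos hB, h (B.inf' hB id)]
        rw [Finset.mul_sum, Finset.sum_filter]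
        refine Finset.sum_congr rfl fun b _ => ?_
        have : (b ≤ B.inf' hB id) ↔ ∀ γ ∈ B, b ≤ γ := by
          simp [Finset.le_inf'_iff]
        simp only [this]
        split_ifs <;> ring
      · simp [hg, hB]
    rw [Finset.sum_congr rfl step1, Finset.sum_comm]
    have step2 : ∀ b : L,
        (∑ B ∈ S.powerset, (if B.Nonempty then (-1 : ℝ) ^ (B.card - 1) else 0)
            * (if ∀ γ ∈ B, b ≤ γ then π b else 0))
        = if b < α then π b else 0 := by
      intro b
      set T : Finset L := S.filter (b ≤ ·) with hT
      have hsub : ∀ B : Finset L, B ⊆ S → ((∀ γ ∈ B, b ≤ γ) ↔ B ⊆ T) := by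
        intro B hB
        constructor
        · intro hall γ hγ
          exact Finset.mem_filter.mpr ⟨hB hγ, hall γ hγ⟩
        · intro hsub γ hγ
          exact (Finset.mem_filter.mp (hsub hγ)).2
      have split : (∑ B ∈ S.powerset, (if B.Nonempty then (-1 : ℝ) ^ (B.card - 1) else 0)
            * (if ∀ γ ∈ B, b ≤ γ then π b else 0))
          = ∑ B ∈ T.powerset,
              (if B.Nonempty then (-1 : ℝ) ^ (B.card - 1) else 0) * π b := by
        have hTS : T ⊆ S := Finset.filter_subset _ _
        rw [← Finset.sum_subset (Finset.powerset_mono.mpr hTS)]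
        · refine Finset.sum_congr rfl fun B hB => ?_
          rw [Finset.mem_powerset] at hB
          rw [if_pos ((hsub B (hB.trans hTS)).mpr hB)]
        · intro B hB hnB
          rw [Finset.mem_powerset] at hB hnB
          rw [if_neg (fun hc => hnB ((hsub B hB).mp hc)), mul_zero]
      rw [split, ← Finset.sum_mul]
      have inner : (∑ B ∈ T.powerset,
          (if B.Nonempty then (-1 : ℝ) ^ (B.card - 1) else 0))
          = if T = ∅ then 0 else 1 := by
        have heach : ∀ B ∈ T.powerset,
            (if B.Nonempty then (-1 : ℝ) ^ (B.card - 1) else 0)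
            = (if B = ∅ then 1 else 0) - (-1 : ℝ) ^ B.card := by
          intro B _
          by_cases hB : B = ∅
          · simp [hB]
          · have hne : B.Nonempty := Finset.nonempty_iff_ne_empty.mpr hB
            have hcard : 1 ≤ B.card := Finset.one_le_card.mpr hne
            rw [if_pos hne, if_neg hB]
            have : (-1 : ℝ) ^ B.card = (-1) * (-1 : ℝ) ^ (B.card - 1) := by
              rw [← pow_succ']
              congr 1
              omega
            rw [this]
            ring
        rw [Finset.sum_congr rfl heach, Finset.sum_sub_distrib]
        have h1 : ∑ B ∈ T.powerset, (if B = ∅ then (1:ℝ) else 0) = 1 := by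
          rw [Finset.sum_ite_eq' T.powerset ∅ (fun _ => (1:ℝ))]
          simp [Finset.empty_mem_powerset]
        have h2 : (∑ B ∈ T.powerset, (-1 : ℝ) ^ B.card)
            = if T = ∅ then 1 else 0 := by
          have h0 := Finset.sum_powerset_neg_one_pow_card (x := T)
          calc (∑ B ∈ T.powerset, (-1 : ℝ) ^ B.card)
              = ((∑ B ∈ T.powerset, (-1 : ℤ) ^ B.card : ℤ) : ℝ) := by push_cast; rfl
            _ = _ := by rw [h0]; split_ifs <;> simp
        rw [h1, h2]
        by_cases hT0 : T = ∅ <;> simp [hT0]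
      rw [inner]
      have hiff : T ≠ ∅ ↔ b < α := by
        rw [← Finset.nonempty_iff_ne_empty]
        constructor
        · rintro ⟨γ, hγ⟩
          rw [hT, Finset.mem_filter, hS, Finset.mem_filter] at hγ
          exact lt_of_le_of_lt hγ.2 hγ.1.2.lt
        · intro hlt
          obtain ⟨γ, hbγ, hγα⟩ := exists_le_covBy_of_lt hlt
          exact ⟨γ, by simp [hT, hS, hγα, hbγ]⟩
      by_cases hb : b < α
      · rw [if_neg (hiff.mpr hb ·), if_pos hb, one_mul]
      · rw [if_pos (by by_contra hc; exact hb (hiff.mp hc)), if_neg hb, zero_mul]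
    rw [Finset.sum_congr rfl (fun b _ => step2 b)]
    exact (Finset.sum_filter _ _).symm
  rw [key, h α]
  have hsplit : Finset.univ.filter (· ≤ α)
      = insert α (Finset.univ.filter (· < α)) := by
    ext b
    simp only [Finset.mem_filter, Finset.mem_insert, Finset.mem_univ, true_and]
    constructor
    · intro hle
      rcases eq_or_lt_of_le hle with h1 | h1
      · exact Or.inl h1
      · exact Or.inr h1
    · rintro (rfl | hlt)
      · exact le_refl _
      · exact hlt.le
  rw [hsplit, Finset.sum_insert (by simp)]
  ring
end

section
/- Let (Ω, 𝔄, ℙ) be a probability space, A an event, and E₁, …, E_k events such that A ⊆ E_i for all i and ℙ(E_i ∩ E_j) = ℙ(A) for all i ≠ j. Then for every nonempty subset B ⊆ {1,…,k}: ℙ(⋃_{i∈B} E_i) = ℙ(A) + Σ_{i∈B} (ℙ(E_i) − ℙ(A)). In particular, writing d_i := ℙ(E_i) − ℙ(A) ≥ 0, the probability of the union of any subfamily of the E_i equals ℙ(A) plus the sum of the corresponding increments d_i. -/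
open MeasureTheory

theorem prob_union_of_children_events
    {Ω : Type*} [MeasurableSpace Ω] (ℙ : Measure Ω) [IsProbabilityMeasure ℙ]
    (k : ℕ) (A : Set Ω) (E : Fin k → Set Ω)
    (hA : MeasurableSet A) (hE : ∀ i, MeasurableSet (E i))
    (hsub : ∀ i, A ⊆ E i)
    (hpair : ∀ i j, i ≠ j → ℙ (E i ∩ E j) = ℙ A) :
    ∀ B : Finset (Fin k), B.Nonempty →
      (ℙ (⋃ i ∈ B, E i)).toReal
        = (ℙ A).toReal + ∑ i ∈ B, ((ℙ (E i)).toReal - (ℙ A).toReal) := by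
  -- key lemma: for a ∉ B, B nonempty, ℙ (E a ∩ ⋃ i∈B, E i) = ℙ A
  have key : ∀ (a : Fin k) (B : Finset (Fin k)), a ∉ B → B.Nonempty →
      ℙ (E a ∩ ⋃ i ∈ B, E i) = ℙ A := by
    intro a B haB hBne
    apply le_antisymm
    · -- S ⊆ A ∪ (⋃ i∈B, (E a ∩ E i) \ A), and each (E a ∩ E i)\A is null
      have hSsub : E a ∩ ⋃ i ∈ B, E i ⊆ A ∪ ⋃ i ∈ B, ((E a ∩ E i) \ A) := by
        rintro x ⟨hxa, hx⟩
        simp only [Set.mem_iUnion] at hx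
        obtain ⟨i, hiB, hxi⟩ := hx
        by_cases hxA : x ∈ A
        · exact Or.inl hxA
        · refine Or.inr ?_
          simp only [Set.mem_iUnion]
          exact ⟨i, hiB, ⟨hxa, hxi⟩, hxA⟩
      calc ℙ (E a ∩ ⋃ i ∈ B, E i) ≤ ℙ (A ∪ ⋃ i ∈ B, ((E a ∩ E i) \ A)) :=
            measure_mono hSsub
        _ ≤ ℙ A + ℙ (⋃ i ∈ B, ((E a ∩ E i) \ A)) := measure_union_le _ _
        _ ≤ ℙ A + ∑ i ∈ B, ℙ ((E a ∩ E i) \ A) := by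
            gcongr
            exact measure_biUnion_finset_le _ _
        _ = ℙ A + ∑ i ∈ B, 0 := by
            congr 1
            apply Finset.sum_congr rfl
            intro i hiB
            have hne : a ≠ i := fun h => haB (h ▸ hiB)
            have h1 : ℙ (E a ∩ E i) = ℙ A := hpair a i hne
            have h2 : A ⊆ E a ∩ E i := Set.subset_inter (hsub a) (hsub i)
            have hd := measure_diff_add_inter (μ := ℙ) (E a ∩ E i) hA
            rw [Set.inter_eq_right.mpr h2, h1] at hd
            have h3 : ℙ ((E a ∩ E i) \ A) + ℙ A = 0 + ℙ A := by
              rw [zero_add]; exact hd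
            exact (ENNReal.add_left_inj (measure_ne_top ℙ A)).mp h3
        _ = ℙ A := by simp
    · -- A ⊆ S since B nonempty
      obtain ⟨i, hiB⟩ := hBne
      apply measure_mono
      intro x hx
      exact ⟨hsub a hx, Set.mem_biUnion hiB (hsub i hx)⟩
  intro B hBne
  induction B using Finset.cons_induction with
  | empty => exact absurd hBne (by simp)
  | cons a B haB ih =>
    rcases B.eq_empty_or_nonempty with rfl | hB
    · simp
    · have hU : MeasurableSet (⋃ i ∈ B, E i) :=
        MeasurableSet.biUnion B.countable_toSet fun i _ => hE i
      have hadd : ℙ (E a ∪ ⋃ i ∈ B, E i) + ℙ (E a ∩ ⋃ i ∈ B, E i)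
          = ℙ (E a) + ℙ (⋃ i ∈ B, E i) := measure_union_add_inter _ hU
      rw [key a B haB hB] at hadd
      have hfin : ∀ s : Set Ω, ℙ s ≠ ⊤ := fun s => measure_ne_top ℙ s
      have hadd' : (ℙ (E a ∪ ⋃ i ∈ B, E i)).toReal + (ℙ A).toReal
          = (ℙ (E a)).toReal + (ℙ (⋃ i ∈ B, E i)).toReal := by
        rw [← ENNReal.toReal_add (hfin _) (hfin _),
          ← ENNReal.toReal_add (hfin _) (hfin _), hadd]
      have hcup : (⋃ i ∈ Finset.cons a B haB, E i) = E a ∪ ⋃ i ∈ B, E i := by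
        simp [Finset.cons_eq_insert, Set.biUnion_insert]
      rw [hcup, Finset.sum_cons, ih hB] at *
      linarith
end

section
/- Let k ≥ 1, let p > 0, and let d₁, …, d_k ≥ 0 be real numbers. Then Σ_{B ⊆ {1,…,k}} (−1)^{|B|} · log₂(p + Σ_{i∈B} d_i) ≤ 0, where the sum ranges over all subsets B of {1,…,k} (the empty set contributing log₂ p). Equivalently, −log₂ p + Σ_{∅ ≠ B ⊆ {1,…,k}} (−1)^{|B|−1} log₂(p + Σ_{i∈B} d_i) ≥ 0. -/
open Real Finset

namespace AltLog

variable {ι : Type*} [DecidableEq ι]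

noncomputable def P (L : List ℝ) (t : ℝ) : ℝ := (L.map fun q => (q + t)⁻¹).prod

lemma P_cons (q : ℝ) (L : List ℝ) (t : ℝ) : P (q :: L) t = (q + t)⁻¹ * P L t := by
  simp [P]

lemma P_append (L₁ L₂ : List ℝ) (t : ℝ) : P (L₁ ++ L₂) t = P L₁ t * P L₂ t := by
  simp [P]

lemma P_shift (L : List ℝ) (c t : ℝ) : P L (c + t) = P (L.map (· + c)) t := by
  simp only [P, List.map_map]
  congr 1
  apply List.map_congr_left
  intro q _
  simp only [Function.comp]
  ring_nf

lemma P_pos {L : List ℝ} (hL : ∀ q ∈ L, 0 < q) {t : ℝ} (ht : 0 ≤ t) : 0 < P L t := by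
  induction L with
  | nil => simp [P]
  | cons q L ih =>
    rw [P_cons]
    have hq := hL q (by simp)
    exact mul_pos (inv_pos.2 (by linarith)) (ih fun r hr => hL r (by simp [hr]))

lemma diff_nonneg (s : Finset ι) (d : ι → ℝ) (hd : ∀ i, 0 ≤ d i) {e : ℝ} (he : 0 ≤ e)
    (H : ∀ L : List ℝ, (∀ q ∈ L, 0 < q) →
      0 ≤ ∑ B ∈ s.powerset, (-1 : ℝ) ^ B.card * P L (∑ i ∈ B, d i)) :
    ∀ (L₂ L₁ : List ℝ), (∀ q ∈ L₁, 0 < q) → (∀ q ∈ L₂, 0 < q) →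
    0 ≤ ∑ B ∈ s.powerset, (-1 : ℝ) ^ B.card *
        (P (L₁ ++ L₂) (∑ i ∈ B, d i) - P (L₁ ++ L₂.map (· + e)) (∑ i ∈ B, d i)) := by
  intro L₂
  induction L₂ with
  | nil => intro L₁ _ _; simp
  | cons q L₂ ih =>
    intro L₁ h₁ h₂
    have hq : 0 < q := h₂ q (by simp)
    have h₂' : ∀ r ∈ L₂, 0 < r := fun r hr => h₂ r (by simp [hr])
    have key : ∀ B ∈ s.powerset,
        (-1 : ℝ) ^ B.card *
          (P (L₁ ++ q :: L₂) (∑ i ∈ B, d i) -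
            P (L₁ ++ (q :: L₂).map (· + e)) (∑ i ∈ B, d i))
        = (-1 : ℝ) ^ B.card *
            (P ((L₁ ++ [q]) ++ L₂) (∑ i ∈ B, d i) -
              P ((L₁ ++ [q]) ++ L₂.map (· + e)) (∑ i ∈ B, d i))
          + e * ((-1 : ℝ) ^ B.card *
              P ((L₁ ++ [q, q + e]) ++ L₂.map (· + e)) (∑ i ∈ B, d i)) := by
      intro B _
      set t := ∑ i ∈ B, d i with ht
      have htn : 0 ≤ t := Finset.sum_nonneg fun i _ => hd i
      have h1 : q + t ≠ 0 := by positivity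
      have h2 : q + e + t ≠ 0 := by positivity
      rw [show L₁ ++ (q :: L₂).map (· + e) = L₁ ++ (q + e) :: L₂.map (· + e) by simp]
      rw [show (L₁ ++ [q]) ++ L₂ = L₁ ++ q :: L₂ by simp]
      rw [show (L₁ ++ [q]) ++ L₂.map (· + e) = L₁ ++ q :: L₂.map (· + e) by simp]
      rw [show (L₁ ++ [q, q + e]) ++ L₂.map (· + e) = L₁ ++ q :: (q + e) :: L₂.map (· + e) by simp]
      rw [P_append, P_append, P_append, P_append, P_cons, P_cons, P_cons, P_cons, P_cons]
      have hαβ : (q + t)⁻¹ - (q + e + t)⁻¹ = e * ((q + t)⁻¹ * (q + e + t)⁻¹) := by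
        field_simp
        ring
      linear_combination ((-1 : ℝ) ^ B.card * P L₁ t * P (L₂.map (· + e)) t) * hαβ
    rw [Finset.sum_congr rfl key, Finset.sum_add_distrib, ← Finset.mul_sum]
    apply add_nonneg
    · exact ih (L₁ ++ [q]) (by
        intro r hr
        rcases List.mem_append.1 hr with h | h
        · exact h₁ r h
        · simp at h; subst h; exact hq) h₂'
    · refine mul_nonneg he (H ((L₁ ++ [q, q + e]) ++ L₂.map (· + e)) ?_)
      intro r hr
      rcases List.mem_append.1 hr with h | h
      · rcases List.mem_append.1 h with h' | h'
        · exact h₁ r h'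
        · simp at h'
          rcases h' with h' | h' <;> subst h' <;> linarith
      · simp at h
        obtain ⟨a, ha, rfl⟩ := h
        have := h₂' a ha
        linarith

lemma theta_nonneg (s : Finset ι) (d : ι → ℝ) (hd : ∀ i, 0 ≤ d i) :
    ∀ L : List ℝ, (∀ q ∈ L, 0 < q) →
      0 ≤ ∑ B ∈ s.powerset, (-1 : ℝ) ^ B.card * P L (∑ i ∈ B, d i) := by
  induction s using Finset.induction_on with
  | empty =>
    intro L hL
    simp only [Finset.powerset_empty, Finset.sum_singleton, Finset.card_empty, pow_zero,
      Finset.sum_empty, one_mul]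
    exact (P_pos hL le_rfl).le
  | insert _ _ ha ih =>
    rename_i a s
    intro L hL
    rw [Finset.sum_powerset_insert ha]
    have step : ∀ B ∈ s.powerset,
        (-1 : ℝ) ^ (insert a B).card * P L (∑ i ∈ insert a B, d i)
        = -((-1 : ℝ) ^ B.card * P (L.map (· + d a)) (∑ i ∈ B, d i)) := by
      intro B hB
      have haB : a ∉ B := fun h => ha (Finset.mem_powerset.1 hB h)
      rw [Finset.card_insert_of_notMem haB, Finset.sum_insert haB, P_shift, pow_succ]
      ring
    rw [Finset.sum_congr rfl step, Finset.sum_neg_distrib]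
    have := diff_nonneg s d hd (hd a) ih L [] (by simp) hL
    simp only [List.nil_append, mul_sub] at this
    rw [Finset.sum_sub_distrib] at this
    linarith

lemma hasDeriv (s : Finset ι) (d : ι → ℝ) (hd : ∀ i, 0 ≤ d i) {p : ℝ} (hp : 0 < p) :
    HasDerivAt (fun x => ∑ B ∈ s.powerset, (-1 : ℝ) ^ B.card * logb 2 (x + ∑ i ∈ B, d i))
      (∑ B ∈ s.powerset, (-1 : ℝ) ^ B.card * ((p + ∑ i ∈ B, d i)⁻¹ / Real.log 2)) p := by
  apply HasDerivAt.fun_sum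
  intro B _
  have ht : (0:ℝ) < p + ∑ i ∈ B, d i := by
    have : (0:ℝ) ≤ ∑ i ∈ B, d i := Finset.sum_nonneg fun i _ => hd i
    linarith
  have h1 : HasDerivAt (fun x : ℝ => x + ∑ i ∈ B, d i) 1 p := (hasDerivAt_id p).add_const _
  have h2 : HasDerivAt Real.log (p + ∑ i ∈ B, d i)⁻¹ (p + ∑ i ∈ B, d i) :=
    Real.hasDerivAt_log ht.ne'
  have h3 := (h2.comp p h1).div_const (Real.log 2)
  have h4 := h3.const_mul ((-1 : ℝ) ^ B.card)
  simp only [mul_one] at h4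
  exact h4

lemma f_mono (s : Finset ι) (d : ι → ℝ) (hd : ∀ i, 0 ≤ d i) :
    MonotoneOn (fun p => ∑ B ∈ s.powerset, (-1 : ℝ) ^ B.card * logb 2 (p + ∑ i ∈ B, d i))
      (Set.Ioi 0) := by
  have hint : interior (Set.Ioi (0:ℝ)) = Set.Ioi 0 := interior_Ioi
  apply monotoneOn_of_deriv_nonneg (convex_Ioi 0)
  · intro x hx
    exact (hasDeriv s d hd hx).continuousAt.continuousWithinAt
  · rw [hint]
    intro x hx
    exact (hasDeriv s d hd hx).differentiableAt.differentiableWithinAt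
  · rw [hint]
    intro x hx
    rw [(hasDeriv s d hd hx).deriv]
    have hθ := theta_nonneg s d hd [x] (by intro q hq; simp at hq; subst hq; exact hx)
    have hrw : ∑ B ∈ s.powerset, (-1 : ℝ) ^ B.card * ((x + ∑ i ∈ B, d i)⁻¹ / Real.log 2)
        = (Real.log 2)⁻¹ * ∑ B ∈ s.powerset, (-1 : ℝ) ^ B.card * P [x] (∑ i ∈ B, d i) := by
      rw [Finset.mul_sum]
      refine Finset.sum_congr rfl fun B _ => ?_
      simp [P]
      ring
    rw [hrw]
    have hlog : (0:ℝ) < Real.log 2 := Real.log_pos (by norm_num)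
    exact mul_nonneg (inv_nonneg.2 hlog.le) hθ

end AltLog

open Real

theorem alternating_log_sum_nonpos
    (k : ℕ) (hk : 1 ≤ k) (p : ℝ) (hp : 0 < p)
    (d : Fin k → ℝ) (hd : ∀ i, 0 ≤ d i) :
    (∑ B : Finset (Fin k), (-1 : ℝ) ^ B.card * logb 2 (p + ∑ i ∈ B, d i)) ≤ 0 ∧
    0 ≤ -logb 2 p +
      ∑ B ∈ (Finset.univ : Finset (Fin k)).powerset.filter Finset.Nonempty,
        (-1 : ℝ) ^ (B.card - 1) * logb 2 (p + ∑ i ∈ B, d i) := by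
  classical
  have a : Fin k := ⟨0, hk⟩
  set s' := (Finset.univ : Finset (Fin k)).erase a with hs'
  have main1 : (∑ B : Finset (Fin k), (-1 : ℝ) ^ B.card * logb 2 (p + ∑ i ∈ B, d i)) ≤ 0 := by
    have huniv : insert a s' = Finset.univ := Finset.insert_erase (Finset.mem_univ a)
    have ha : a ∉ s' := Finset.notMem_erase a _
    rw [← Finset.powerset_univ, ← huniv, Finset.sum_powerset_insert ha]
    have step : ∀ B ∈ s'.powerset,
        (-1 : ℝ) ^ (insert a B).card * logb 2 (p + ∑ i ∈ insert a B, d i)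
        = -((-1 : ℝ) ^ B.card * logb 2 ((p + d a) + ∑ i ∈ B, d i)) := by
      intro B hB
      have haB : a ∉ B := fun h => ha (Finset.mem_powerset.1 hB h)
      rw [Finset.card_insert_of_notMem haB, Finset.sum_insert haB, pow_succ]
      ring_nf
    rw [Finset.sum_congr rfl step, Finset.sum_neg_distrib]
    have hda := hd a
    have hm := AltLog.f_mono s' d hd (Set.mem_Ioi.2 hp)
      (Set.mem_Ioi.2 (by linarith : (0:ℝ) < p + d a)) (by linarith : p ≤ p + d a)
    simp only at hm
    linarith
  refine ⟨main1, ?_⟩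
  have hemp : Finset.filter (fun B => ¬ B.Nonempty) (Finset.univ : Finset (Fin k)).powerset
      = {(∅ : Finset (Fin k))} := by
    ext B
    simp [Finset.not_nonempty_iff_eq_empty]
  have split := Finset.sum_filter_add_sum_filter_not
    (Finset.univ : Finset (Fin k)).powerset Finset.Nonempty
    (fun B => (-1 : ℝ) ^ B.card * logb 2 (p + ∑ i ∈ B, d i))
  rw [hemp, Finset.sum_singleton] at split
  simp only [Finset.card_empty, pow_zero, Finset.sum_empty, add_zero, one_mul] at split
  have hneg : ∑ B ∈ (Finset.univ : Finset (Fin k)).powerset.filter Finset.Nonempty,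
      (-1 : ℝ) ^ B.card * logb 2 (p + ∑ i ∈ B, d i)
      = -∑ B ∈ (Finset.univ : Finset (Fin k)).powerset.filter Finset.Nonempty,
        (-1 : ℝ) ^ (B.card - 1) * logb 2 (p + ∑ i ∈ B, d i) := by
    rw [← Finset.sum_neg_distrib]
    refine Finset.sum_congr rfl fun B hB => ?_
    have hBne : B.Nonempty := (Finset.mem_filter.1 hB).2
    have hcard : B.card = B.card - 1 + 1 := (Nat.succ_pred_eq_of_pos (Finset.card_pos.2 hBne)).symm
    conv_lhs => rw [hcard]
    rw [pow_succ]
    ring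
  rw [← Finset.powerset_univ] at main1
  rw [hneg] at split
  linarith
end

section
/- Let (Ω, 𝔄, ℙ) be a probability space, A an event with ℙ(A) > 0, and E₁, …, E_k events such that A ⊆ E_i for all i and ℙ(E_i ∩ E_j) = ℙ(A) for all i ≠ j. Then the informative partial information atom is nonnegative: −log₂ ℙ(A) + Σ_{∅ ≠ B ⊆ {1,…,k}} (−1)^{|B|−1} log₂ ℙ(⋃_{i∈B} E_i) ≥ 0. -/
open MeasureTheory Real

private lemma deriv_inv_pow_aux (c : ℝ) (n : ℕ) {y : ℝ} (hyc : 0 < y + c) :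
    HasDerivAt (fun z : ℝ => ((z + c) ^ (n + 1))⁻¹)
      (-((n + 1 : ℝ) * ((y + c) ^ (n + 2))⁻¹)) y := by
  have h1 : HasDerivAt (fun z : ℝ => z + c) 1 y := (hasDerivAt_id y).add_const c
  have h2 := h1.fun_pow (n + 1)
  have h3 : HasDerivAt (fun z : ℝ => ((z + c) ^ (n + 1))⁻¹)
      (-(↑(n + 1) * (y + c) ^ (n + 1 - 1) * 1) / ((y + c) ^ (n + 1)) ^ 2) y :=
    h2.fun_inv (pow_ne_zero _ hyc.ne')
  convert h3 using 1
  have hne : y + c ≠ 0 := hyc.ne'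
  simp only [Nat.add_sub_cancel, mul_one]
  field_simp
  push_cast
  ring

private lemma inv_alt_nonneg {ι : Type*} [DecidableEq ι] (d : ι → ℝ) (hd : ∀ i, 0 ≤ d i) :
    ∀ (s : Finset ι) (n : ℕ) (x : ℝ), 0 < x →
      0 ≤ ∑ B ∈ s.powerset, (-1 : ℝ) ^ B.card * ((x + ∑ i ∈ B, d i) ^ (n + 1))⁻¹ := by
  intro s
  induction s using Finset.induction_on with
  | empty =>
      intro n x hx
      simp only [Finset.powerset_empty, Finset.sum_singleton, Finset.card_empty,
        pow_zero, Finset.sum_empty, add_zero, one_mul]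
      positivity
  | @insert a s ha ih =>
      intro n x hx
      rw [Finset.sum_powerset_insert ha]
      have hc : 0 ≤ d a := hd a
      set G : ℝ → ℝ := fun y => ∑ B ∈ s.powerset,
        (-1 : ℝ) ^ B.card * ((y + ∑ i ∈ B, d i) ^ (n + 1))⁻¹ with hGdef
      have hsum0 : ∀ B ∈ s.powerset, (0:ℝ) ≤ ∑ i ∈ B, d i :=
        fun B _ => Finset.sum_nonneg fun i _ => hd i
      have hsec : ∀ B ∈ s.powerset,
          (-1 : ℝ) ^ (insert a B).card * ((x + ∑ i ∈ insert a B, d i) ^ (n + 1))⁻¹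
            = -((-1 : ℝ) ^ B.card * (((x + d a) + ∑ i ∈ B, d i) ^ (n + 1))⁻¹) := by
        intro B hB
        have haB : a ∉ B := fun h => ha (Finset.mem_powerset.mp hB h)
        rw [Finset.card_insert_of_notMem haB, Finset.sum_insert haB, pow_succ]
        have hx' : x + (d a + ∑ i ∈ B, d i) = (x + d a) + ∑ i ∈ B, d i := by ring
        rw [hx']
        ring
      rw [Finset.sum_congr rfl hsec]
      have hneg : ∑ B ∈ s.powerset,
          -((-1 : ℝ) ^ B.card * (((x + d a) + ∑ i ∈ B, d i) ^ (n + 1))⁻¹) = -G (x + d a) := by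
        simp [hGdef]
      rw [hneg]
      have hder : ∀ y : ℝ, 0 < y → HasDerivAt G
          (∑ B ∈ s.powerset,
            (-1 : ℝ) ^ B.card * (-((n + 1 : ℝ) * ((y + ∑ i ∈ B, d i) ^ (n + 2))⁻¹))) y := by
        intro y hy
        apply HasDerivAt.fun_sum
        intro B hB
        exact (deriv_inv_pow_aux _ n (by linarith [hsum0 B hB])).const_mul _
      have hderle : ∀ y : ℝ, 0 < y →
          (∑ B ∈ s.powerset,
            (-1 : ℝ) ^ B.card * (-((n + 1 : ℝ) * ((y + ∑ i ∈ B, d i) ^ (n + 2))⁻¹))) ≤ 0 := by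
        intro y hy
        have hih := ih (n + 1) y hy
        have h12 : n + 1 + 1 = n + 2 := rfl
        rw [h12] at hih
        have he : ∑ B ∈ s.powerset,
            (-1 : ℝ) ^ B.card * (-((n + 1 : ℝ) * ((y + ∑ i ∈ B, d i) ^ (n + 2))⁻¹))
            = -((n + 1 : ℝ) * ∑ B ∈ s.powerset,
                (-1 : ℝ) ^ B.card * ((y + ∑ i ∈ B, d i) ^ (n + 2))⁻¹) := by
          rw [Finset.mul_sum, ← Finset.sum_neg_distrib]
          exact Finset.sum_congr rfl fun B _ => by ring
        rw [he]
        have hge : (0:ℝ) ≤ (n + 1 : ℝ) * ∑ B ∈ s.powerset,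
            (-1 : ℝ) ^ B.card * ((y + ∑ i ∈ B, d i) ^ (n + 2))⁻¹ :=
          mul_nonneg (by positivity) hih
        linarith
      have hanti : AntitoneOn G (Set.Ici x) := by
        apply antitoneOn_of_deriv_nonpos (convex_Ici x)
        · intro y hy
          exact ((hder y (lt_of_lt_of_le hx hy)).continuousAt).continuousWithinAt
        · intro y hy
          rw [interior_Ici] at hy
          exact ((hder y (hx.trans hy)).differentiableAt).differentiableWithinAt
        · intro y hy
          rw [interior_Ici] at hy
          rw [(hder y (hx.trans hy)).deriv]
          exact hderle y (hx.trans hy)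
      have hle : G (x + d a) ≤ G x :=
        hanti Set.self_mem_Ici (Set.mem_Ici.mpr (le_add_of_nonneg_right hc))
          (le_add_of_nonneg_right hc)
      linarith

private lemma log_alt_mono {ι : Type*} [DecidableEq ι] (d : ι → ℝ) (hd : ∀ i, 0 ≤ d i)
    (s : Finset ι) {x y : ℝ} (hx : 0 < x) (hxy : x ≤ y) :
    ∑ B ∈ s.powerset, (-1 : ℝ) ^ B.card * Real.log (x + ∑ i ∈ B, d i)
      ≤ ∑ B ∈ s.powerset, (-1 : ℝ) ^ B.card * Real.log (y + ∑ i ∈ B, d i) := by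
  set L : ℝ → ℝ := fun z => ∑ B ∈ s.powerset,
    (-1 : ℝ) ^ B.card * Real.log (z + ∑ i ∈ B, d i) with hLdef
  have hsum0 : ∀ B ∈ s.powerset, (0:ℝ) ≤ ∑ i ∈ B, d i :=
    fun B _ => Finset.sum_nonneg fun i _ => hd i
  have hder : ∀ z : ℝ, 0 < z → HasDerivAt L
      (∑ B ∈ s.powerset, (-1 : ℝ) ^ B.card * (z + ∑ i ∈ B, d i)⁻¹) z := by
    intro z hz
    apply HasDerivAt.fun_sum
    intro B hB
    have hpos : 0 < z + ∑ i ∈ B, d i := by linarith [hsum0 B hB]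
    have h1 : HasDerivAt (fun w : ℝ => w + ∑ i ∈ B, d i) 1 z := (hasDerivAt_id z).add_const _
    have h2 := (h1.log hpos.ne').const_mul ((-1 : ℝ) ^ B.card)
    simpa [one_div] using h2
  have hnonneg : ∀ z : ℝ, 0 < z →
      0 ≤ ∑ B ∈ s.powerset, (-1 : ℝ) ^ B.card * (z + ∑ i ∈ B, d i)⁻¹ := by
    intro z hz
    have := inv_alt_nonneg d hd s 0 z hz
    simpa using this
  have hmono : MonotoneOn L (Set.Ici x) := by
    apply monotoneOn_of_deriv_nonneg (convex_Ici x)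
    · intro z hz
      exact ((hder z (lt_of_lt_of_le hx hz)).continuousAt).continuousWithinAt
    · intro z hz
      rw [interior_Ici] at hz
      exact ((hder z (hx.trans hz)).differentiableAt).differentiableWithinAt
    · intro z hz
      rw [interior_Ici] at hz
      rw [(hder z (hx.trans hz)).deriv]
      exact hnonneg z (hx.trans hz)
  exact hmono Set.self_mem_Ici (Set.mem_Ici.mpr hxy) hxy

private lemma log_alt_nonpos {ι : Type*} [DecidableEq ι] (d : ι → ℝ) (hd : ∀ i, 0 ≤ d i)
    (s : Finset ι) {x : ℝ} (hx : 0 < x) (hx1 : x ≤ 1) :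
    ∑ B ∈ s.powerset, (-1 : ℝ) ^ B.card * Real.log (x + ∑ i ∈ B, d i) ≤ 0 := by
  rcases s.eq_empty_or_nonempty with rfl | hs
  · simpa using Real.log_nonpos hx.le hx1
  · obtain ⟨j, hj⟩ := hs
    have hjs : j ∉ s.erase j := Finset.notMem_erase j s
    rw [← Finset.insert_erase hj, Finset.sum_powerset_insert hjs]
    set t := s.erase j with ht
    have hsec : ∀ B ∈ t.powerset,
        (-1 : ℝ) ^ (insert j B).card * Real.log (x + ∑ i ∈ insert j B, d i)
          = -((-1 : ℝ) ^ B.card * Real.log ((x + d j) + ∑ i ∈ B, d i)) := by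
      intro B hB
      have hjB : j ∉ B := fun h => hjs (Finset.mem_powerset.mp hB h)
      rw [Finset.card_insert_of_notMem hjB, Finset.sum_insert hjB, pow_succ]
      have hx' : x + (d j + ∑ i ∈ B, d i) = (x + d j) + ∑ i ∈ B, d i := by ring
      rw [hx']
      ring
    rw [Finset.sum_congr rfl hsec]
    have hmono := log_alt_mono d hd t hx (le_add_of_nonneg_right (hd j))
    have hnegsum : ∑ B ∈ t.powerset,
        -((-1 : ℝ) ^ B.card * Real.log ((x + d j) + ∑ i ∈ B, d i))
        = -∑ B ∈ t.powerset, (-1 : ℝ) ^ B.card * Real.log ((x + d j) + ∑ i ∈ B, d i) := by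
      simp
    rw [hnegsum]
    linarith

theorem informative_atom_nonneg
    {Ω : Type*} [MeasurableSpace Ω] (ℙ : Measure Ω) [IsProbabilityMeasure ℙ]
    (k : ℕ) (A : Set Ω) (E : Fin k → Set Ω)
    (hA : MeasurableSet A) (hE : ∀ i, MeasurableSet (E i))
    (hApos : 0 < ℙ A)
    (hsub : ∀ i, A ⊆ E i)
    (hpair : ∀ i j, i ≠ j → ℙ (E i ∩ E j) = ℙ A) :
    0 ≤ -logb 2 (ℙ A).toReal +
      ∑ B ∈ (Finset.univ : Finset (Fin k)).powerset.filter Finset.Nonempty,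
        (-1 : ℝ) ^ (B.card - 1) * logb 2 (ℙ (⋃ i ∈ B, E i)).toReal := by
  classical
  have hA1 : ℙ A ≠ ⊤ := measure_ne_top ℙ A
  set a : ℝ := (ℙ A).toReal with ha_def
  have ha : 0 < a := ENNReal.toReal_pos hApos.ne' hA1
  have ha1 : a ≤ 1 := by
    have h := prob_le_one (μ := ℙ) (s := A)
    have := ENNReal.toReal_mono (by simp) h
    simpa using this
  set d : Fin k → ℝ := fun i => (ℙ (E i \ A)).toReal with hd_def
  have hd : ∀ i, 0 ≤ d i := fun i => ENNReal.toReal_nonneg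
  have hnullpair : ∀ i j : Fin k, i ≠ j → ℙ ((E i \ A) ∩ (E j \ A)) = 0 := by
    intro i j hij
    have hsub2 : (E i \ A) ∩ (E j \ A) ⊆ (E i ∩ E j) \ A := by
      rintro x ⟨⟨h1, h2⟩, h3, -⟩
      exact ⟨⟨h1, h3⟩, h2⟩
    have h0 : ℙ ((E i ∩ E j) \ A) = 0 := by
      have hsubA : A ⊆ E i ∩ E j := fun x hx => ⟨hsub i hx, hsub j hx⟩
      rw [measure_diff hsubA hA.nullMeasurableSet hA1, hpair i j hij, tsub_self]
    exact le_antisymm ((measure_mono hsub2).trans h0.le) zero_le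
  have hunion : ∀ B : Finset (Fin k), B.Nonempty →
      (ℙ (⋃ i ∈ B, E i)).toReal = a + ∑ i ∈ B, d i := by
    intro B hB
    have hEq : (⋃ i ∈ B, E i) = A ∪ ⋃ i ∈ B, (E i \ A) := by
      obtain ⟨j, hj⟩ := hB
      ext x
      simp only [Set.mem_iUnion, Set.mem_union, Set.mem_diff, exists_prop]
      constructor
      · rintro ⟨i, hi, hxi⟩
        by_cases hxA : x ∈ A
        · exact Or.inl hxA
        · exact Or.inr ⟨i, hi, hxi, hxA⟩
      · rintro (hxA | ⟨i, hi, hxi, -⟩)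
        · exact ⟨j, hj, hsub j hxA⟩
        · exact ⟨i, hi, hxi⟩
    have hmeasU : MeasurableSet (⋃ i ∈ B, (E i \ A)) :=
      B.measurableSet_biUnion fun i _ => (hE i).diff hA
    have hdisj : Disjoint A (⋃ i ∈ B, (E i \ A)) := by
      rw [Set.disjoint_left]
      intro x hxA hxU
      simp only [Set.mem_iUnion, Set.mem_diff, exists_prop] at hxU
      obtain ⟨i, -, -, hnA⟩ := hxU
      exact hnA hxA
    have h1 : ℙ (⋃ i ∈ B, E i) = ℙ A + ℙ (⋃ i ∈ B, (E i \ A)) := by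
      rw [hEq, measure_union hdisj hmeasU]
    have h2 : ℙ (⋃ i ∈ B, (E i \ A)) = ∑ i ∈ B, ℙ (E i \ A) := by
      apply measure_biUnion_finset₀
      · intro i _ j _ hij
        exact hnullpair i j hij
      · intro i _
        exact ((hE i).diff hA).nullMeasurableSet
    rw [h1, ENNReal.toReal_add hA1 (measure_ne_top ℙ _), h2,
      ENNReal.toReal_sum fun i _ => measure_ne_top ℙ _]
  have hrw : ∀ B ∈ (Finset.univ : Finset (Fin k)).powerset.filter Finset.Nonempty,
      (-1 : ℝ) ^ (B.card - 1) * logb 2 (ℙ (⋃ i ∈ B, E i)).toReal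
        = (-1 : ℝ) ^ (B.card - 1) * logb 2 (a + ∑ i ∈ B, d i) := by
    intro B hB
    rw [hunion B (Finset.mem_filter.mp hB).2]
  rw [Finset.sum_congr rfl hrw]
  have key : 0 ≤ -Real.log a +
      ∑ B ∈ (Finset.univ : Finset (Fin k)).powerset.filter Finset.Nonempty,
        (-1 : ℝ) ^ (B.card - 1) * Real.log (a + ∑ i ∈ B, d i) := by
    have hS := log_alt_nonpos d hd (Finset.univ : Finset (Fin k)) ha ha1
    have hsplit : (Finset.univ : Finset (Fin k)).powerset
        = insert ∅ ((Finset.univ : Finset (Fin k)).powerset.filter Finset.Nonempty) := by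
      ext B
      simp only [Finset.mem_powerset, Finset.subset_univ, Finset.mem_insert, Finset.mem_filter,
        true_iff, true_and]
      rcases B.eq_empty_or_nonempty with rfl | hB
      · exact Or.inl rfl
      · exact Or.inr hB
    rw [hsplit, Finset.sum_insert (by simp [Finset.mem_filter])] at hS
    simp only [Finset.card_empty, pow_zero, Finset.sum_empty, add_zero, one_mul] at hS
    have hterm : ∀ B ∈ (Finset.univ : Finset (Fin k)).powerset.filter Finset.Nonempty,
        (-1 : ℝ) ^ B.card * Real.log (a + ∑ i ∈ B, d i)
          = -((-1 : ℝ) ^ (B.card - 1) * Real.log (a + ∑ i ∈ B, d i)) := by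
      intro B hB
      have hBne : B.Nonempty := (Finset.mem_filter.mp hB).2
      have h1 : (-1 : ℝ) ^ B.card = -(-1 : ℝ) ^ (B.card - 1) := by
        conv_lhs => rw [← Nat.sub_add_cancel hBne.card_pos]
        rw [pow_succ]
        ring
      rw [h1]
      ring
    rw [Finset.sum_congr rfl hterm, Finset.sum_neg_distrib] at hS
    linarith
  have hlog2 : (0 : ℝ) < Real.log 2 := Real.log_pos one_lt_two
  have heq : -logb 2 a +
      ∑ B ∈ (Finset.univ : Finset (Fin k)).powerset.filter Finset.Nonempty,
        (-1 : ℝ) ^ (B.card - 1) * logb 2 (a + ∑ i ∈ B, d i)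
      = (-Real.log a +
          ∑ B ∈ (Finset.univ : Finset (Fin k)).powerset.filter Finset.Nonempty,
            (-1 : ℝ) ^ (B.card - 1) * Real.log (a + ∑ i ∈ B, d i)) / Real.log 2 := by
    simp only [Real.logb, add_div, neg_div, Finset.sum_div, mul_div_assoc]
  rw [heq]
  exact div_nonneg key hlog2.le
end

section
/- Let (Ω, 𝔄, ℙ) be a probability space, T and A events with ℙ(T ∩ A) > 0, and E₁, …, E_k events such that A ⊆ E_i for all i and ℙ(T ∩ E_i ∩ E_j) = ℙ(T ∩ A) for all i ≠ j. Then the misinformative partial information atom is nonnegative: −log₂ ℙ(T ∩ A) + Σ_{∅ ≠ B ⊆ {1,…,k}} (−1)^{|B|−1} log₂ ℙ(T ∩ ⋃_{i∈B} E_i) ≥ 0. -/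
open Finset Real

/-- monotone helper -/
lemma mono_aux {f f' : ℝ → ℝ} (hf : ∀ x, 0 < x → HasDerivAt f (f' x) x)
    (hf' : ∀ x, 0 < x → 0 ≤ f' x) {a b : ℝ} (ha : 0 < a) (hab : a ≤ b) : f a ≤ f b := by
  have hD : ∀ x ∈ interior (Set.Ioi (0:ℝ)), DifferentiableAt ℝ f x := by
    intro x hx
    rw [interior_Ioi] at hx
    exact (hf x hx).differentiableAt
  have := monotoneOn_of_deriv_nonneg (convex_Ioi (0:ℝ))
    (fun x hx => ((hf x hx).differentiableAt.continuousAt).continuousWithinAt)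
    (fun x hx => (hD x hx).differentiableWithinAt)
    (fun x hx => by rw [interior_Ioi] at hx; rw [(hf x hx).deriv]; exact hf' x hx)
  exact this (Set.mem_Ioi.2 ha) (Set.mem_Ioi.2 (lt_of_lt_of_le ha hab)) hab

lemma anti_aux {f f' : ℝ → ℝ} (hf : ∀ x, 0 < x → HasDerivAt f (f' x) x)
    (hf' : ∀ x, 0 < x → f' x ≤ 0) {a b : ℝ} (ha : 0 < a) (hab : a ≤ b) : f b ≤ f a := by
  have := mono_aux (f := fun x => -f x) (f' := fun x => -f' x)
    (fun x hx => (hf x hx).neg) (fun x hx => neg_nonneg.2 (hf' x hx)) ha hab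
  linarith

/-- derivative of the basic term -/
lemma term_hasDeriv (m : ℕ) (S : ℝ) {x : ℝ} (hx : 0 < x + S) :
    HasDerivAt (fun y => ((y + S) ^ (m + 1))⁻¹)
      (-((m : ℝ) + 1) * ((x + S) ^ (m + 2))⁻¹) x := by
  have h1 : HasDerivAt (fun y : ℝ => y + S) 1 x := (hasDerivAt_id x).add_const S
  have h2 : HasDerivAt (fun y : ℝ => (y + S) ^ (m + 1))
      (((m : ℝ) + 1) * (x + S) ^ m * 1) x := by
    have := h1.fun_pow (m + 1)
    simpa using this
  have hne : (x + S) ^ (m + 1) ≠ 0 := pow_ne_zero _ (ne_of_gt hx)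
  have h3 := h2.fun_inv hne
  refine h3.congr_deriv ?_
  have hxs : x + S ≠ 0 := ne_of_gt hx
  field_simp
  ring

lemma inv_pow_alt_sum_nonneg {ι : Type*} [DecidableEq ι] (s : Finset ι) (q : ι → ℝ)
    (hq : ∀ i ∈ s, 0 ≤ q i) :
    ∀ (m : ℕ) (a : ℝ), 0 < a →
      0 ≤ ∑ B ∈ s.powerset, (-1 : ℝ) ^ B.card * ((a + ∑ i ∈ B, q i) ^ (m + 1))⁻¹ := by
  induction s using Finset.induction_on with
  | empty =>
      intro m a ha
      simp only [Finset.powerset_empty, Finset.sum_singleton, Finset.card_empty, pow_zero,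
        Finset.sum_empty, add_zero, one_mul]
      positivity
  | @insert j s hj ih =>
      intro m a ha
      have hqs : ∀ i ∈ s, 0 ≤ q i := fun i hi => hq i (Finset.mem_insert_of_mem hi)
      have hqj : 0 ≤ q j := hq j (Finset.mem_insert_self j s)
      have hS : ∀ B : Finset ι, B ∈ s.powerset → 0 ≤ ∑ i ∈ B, q i := by
        intro B hB
        exact Finset.sum_nonneg fun i hi => hqs i (Finset.mem_powerset.1 hB hi)
      rw [Finset.sum_powerset_insert hj]
      have hre : ∀ B ∈ s.powerset,
          (-1 : ℝ) ^ (insert j B).card * ((a + ∑ i ∈ insert j B, q i) ^ (m + 1))⁻¹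
          = -((-1 : ℝ) ^ B.card * (((a + q j) + ∑ i ∈ B, q i) ^ (m + 1))⁻¹) := by
        intro B hB
        have hjB : j ∉ B := fun h => hj (Finset.mem_powerset.1 hB h)
        rw [Finset.card_insert_of_notMem hjB, Finset.sum_insert hjB, pow_succ]
        ring_nf
      rw [Finset.sum_congr rfl hre, Finset.sum_neg_distrib]
      set Φ : ℝ → ℝ := fun x => ∑ B ∈ s.powerset, (-1 : ℝ) ^ B.card * ((x + ∑ i ∈ B, q i) ^ (m + 1))⁻¹ with hΦ
      have key : Φ (a + q j) ≤ Φ a := by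
        apply anti_aux (f := Φ)
          (f' := fun x => -((m : ℝ) + 1) * ∑ B ∈ s.powerset,
            (-1 : ℝ) ^ B.card * ((x + ∑ i ∈ B, q i) ^ (m + 2))⁻¹)
        · intro x hx
          rw [hΦ]
          have : HasDerivAt (fun y => ∑ B ∈ s.powerset, (-1 : ℝ) ^ B.card * ((y + ∑ i ∈ B, q i) ^ (m + 1))⁻¹)
              (∑ B ∈ s.powerset, (-1 : ℝ) ^ B.card * (-((m : ℝ) + 1) * ((x + ∑ i ∈ B, q i) ^ (m + 2))⁻¹)) x := by
            apply HasDerivAt.fun_sum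
            intro B hB
            exact (term_hasDeriv m _ (by have := hS B hB; linarith)).const_mul _
          convert this using 1
          rw [Finset.mul_sum]
          apply Finset.sum_congr rfl
          intro B hB
          ring
        · intro x hx
          have h0 := ih hqs (m + 1) x hx
          have hm : (0:ℝ) ≤ (m : ℝ) + 1 := by positivity
          have : (0:ℝ) ≤ ∑ B ∈ s.powerset, (-1 : ℝ) ^ B.card * ((x + ∑ i ∈ B, q i) ^ (m + 2))⁻¹ := h0
          nlinarith
        · exact ha
        · linarith
      have := ih hqs m a ha
      rw [hΦ] at key
      linarith [key, this]

lemma log_alt_sum_nonpos {ι : Type*} [DecidableEq ι] (s : Finset ι) (q : ι → ℝ)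
    (hq : ∀ i ∈ s, 0 ≤ q i) (a : ℝ) (ha : 0 < a) (ha1 : a ≤ 1) :
    ∑ B ∈ s.powerset, (-1 : ℝ) ^ B.card * Real.log (a + ∑ i ∈ B, q i) ≤ 0 := by
  rcases s.eq_empty_or_nonempty with rfl | ⟨j, hjs⟩
  · simp only [Finset.powerset_empty, Finset.sum_singleton, Finset.card_empty, pow_zero,
      Finset.sum_empty, add_zero, one_mul]
    exact Real.log_nonpos (le_of_lt ha) ha1
  · set s' := s.erase j with hs'
    have hj : j ∉ s' := Finset.notMem_erase j s
    have hins : s = insert j s' := (Finset.insert_erase hjs).symm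
    have hqs : ∀ i ∈ s', 0 ≤ q i := fun i hi => hq i (Finset.mem_of_mem_erase hi)
    have hqj : 0 ≤ q j := hq j hjs
    have hS : ∀ B : Finset ι, B ∈ s'.powerset → 0 ≤ ∑ i ∈ B, q i := by
      intro B hB
      exact Finset.sum_nonneg fun i hi => hqs i (Finset.mem_powerset.1 hB hi)
    rw [hins, Finset.sum_powerset_insert hj]
    have hre : ∀ B ∈ s'.powerset,
        (-1 : ℝ) ^ (insert j B).card * Real.log (a + ∑ i ∈ insert j B, q i)
        = -((-1 : ℝ) ^ B.card * Real.log ((a + q j) + ∑ i ∈ B, q i)) := by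
      intro B hB
      have hjB : j ∉ B := fun h => hj (Finset.mem_powerset.1 hB h)
      rw [Finset.card_insert_of_notMem hjB, Finset.sum_insert hjB, pow_succ]
      ring_nf
    rw [Finset.sum_congr rfl hre, Finset.sum_neg_distrib]
    set Ψ : ℝ → ℝ := fun x => ∑ B ∈ s'.powerset, (-1 : ℝ) ^ B.card * Real.log (x + ∑ i ∈ B, q i) with hΨ
    have key : Ψ a ≤ Ψ (a + q j) := by
      apply mono_aux (f := Ψ)
        (f' := fun x => ∑ B ∈ s'.powerset, (-1 : ℝ) ^ B.card * (x + ∑ i ∈ B, q i)⁻¹)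
      · intro x hx
        rw [hΨ]
        apply HasDerivAt.fun_sum
        intro B hB
        have hpos : 0 < x + ∑ i ∈ B, q i := by have := hS B hB; linarith
        have h1 : HasDerivAt (fun y : ℝ => y + ∑ i ∈ B, q i) 1 x := (hasDerivAt_id x).add_const _
        have := (h1.log (ne_of_gt hpos)).const_mul ((-1 : ℝ) ^ B.card)
        simpa using this
      · intro x hx
        have := inv_pow_alt_sum_nonneg s' q hqs 0 x hx
        simpa using this
      · exact ha
      · linarith
    rw [hΨ] at key
    linarith


open MeasureTheory Real

theorem misinformative_atom_nonneg
    {Ω : Type*} [MeasurableSpace Ω] (ℙ : Measure Ω) [IsProbabilityMeasure ℙ]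
    (k : ℕ) (T A : Set Ω) (E : Fin k → Set Ω)
    (hT : MeasurableSet T) (hA : MeasurableSet A) (hE : ∀ i, MeasurableSet (E i))
    (hTApos : 0 < ℙ (T ∩ A))
    (hsub : ∀ i, A ⊆ E i)
    (hpair : ∀ i j, i ≠ j → ℙ (T ∩ (E i ∩ E j)) = ℙ (T ∩ A)) :
    0 ≤ -logb 2 (ℙ (T ∩ A)).toReal +
      ∑ B ∈ (Finset.univ : Finset (Fin k)).powerset.filter Finset.Nonempty,
        (-1 : ℝ) ^ (B.card - 1) * logb 2 (ℙ (T ∩ ⋃ i ∈ B, E i)).toReal := by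
  classical
  set a : ℝ := (ℙ (T ∩ A)).toReal with hadef
  have ha : 0 < a := ENNReal.toReal_pos hTApos.ne' (measure_ne_top _ _)
  have ha1 : a ≤ 1 := by
    rw [hadef]
    have h1 : ℙ (T ∩ A) ≤ 1 := prob_le_one
    calc (ℙ (T ∩ A)).toReal ≤ (1 : ENNReal).toReal :=
          ENNReal.toReal_mono (by simp) h1
      _ = 1 := by simp
  set q : Fin k → ℝ := fun i => (ℙ (T ∩ E i)).toReal - a with hqdef
  have hq : ∀ i, 0 ≤ q i := by
    intro i
    have hmono : ℙ (T ∩ A) ≤ ℙ (T ∩ E i) :=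
      measure_mono (Set.inter_subset_inter_right T (hsub i))
    have := ENNReal.toReal_mono (measure_ne_top _ _) hmono
    simp only [hqdef, sub_nonneg]
    exact this
  -- pairwise intersection of a union with a new E j
  have hcap : ∀ (B : Finset (Fin k)) (j : Fin k), j ∉ B → B.Nonempty →
      ℙ (T ∩ ((⋃ i ∈ B, E i) ∩ E j)) = ℙ (T ∩ A) := by
    intro B j hjB ⟨i₀, hi₀⟩
    have hset : T ∩ ((⋃ i ∈ B, E i) ∩ E j) = ⋃ i ∈ B, (T ∩ (E i ∩ E j)) := by
      ext x
      simp only [Set.mem_inter_iff, Set.mem_iUnion, exists_prop]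
      constructor
      · rintro ⟨hxT, ⟨i, hi, hxi⟩, hxj⟩
        exact ⟨i, hi, hxT, hxi, hxj⟩
      · rintro ⟨i, hi, hxT, hxi, hxj⟩
        exact ⟨hxT, ⟨i, hi, hxi⟩, hxj⟩
    rw [hset]
    apply le_antisymm
    · -- upper bound
      have hsub2 : (⋃ i ∈ B, (T ∩ (E i ∩ E j))) ⊆
          (T ∩ A) ∪ ⋃ i ∈ B, ((T ∩ (E i ∩ E j)) \ (T ∩ A)) := by
        intro x hx
        by_cases hxa : x ∈ T ∩ A
        · exact Or.inl hxa
        · simp only [Set.mem_union, Set.mem_iUnion, exists_prop, Set.mem_diff] at hx ⊢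
          obtain ⟨i, hi, hxi⟩ := hx
          exact Or.inr ⟨i, hi, hxi, hxa⟩
      calc ℙ (⋃ i ∈ B, (T ∩ (E i ∩ E j)))
          ≤ ℙ ((T ∩ A) ∪ ⋃ i ∈ B, ((T ∩ (E i ∩ E j)) \ (T ∩ A))) := measure_mono hsub2
        _ ≤ ℙ (T ∩ A) + ℙ (⋃ i ∈ B, ((T ∩ (E i ∩ E j)) \ (T ∩ A))) := measure_union_le _ _
        _ ≤ ℙ (T ∩ A) + ∑ i ∈ B, ℙ ((T ∩ (E i ∩ E j)) \ (T ∩ A)) := by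
            gcongr
            exact measure_biUnion_finset_le B _
        _ = ℙ (T ∩ A) := by
            have hz : ∀ i ∈ B, ℙ ((T ∩ (E i ∩ E j)) \ (T ∩ A)) = 0 := by
              intro i hi
              have hij : i ≠ j := fun h => hjB (h ▸ hi)
              have hss : T ∩ A ⊆ T ∩ (E i ∩ E j) :=
                Set.inter_subset_inter_right T (Set.subset_inter (hsub i) (hsub j))
              rw [measure_diff hss (hT.inter hA).nullMeasurableSet (measure_ne_top _ _),
                hpair i j hij, tsub_self]
            rw [Finset.sum_eq_zero hz, add_zero]
    · -- lower bound
      have hss : T ∩ A ⊆ ⋃ i ∈ B, (T ∩ (E i ∩ E j)) := by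
        intro x hx
        simp only [Set.mem_iUnion, exists_prop]
        exact ⟨i₀, hi₀, hx.1, hsub i₀ hx.2, hsub j hx.2⟩
      exact measure_mono hss
  -- the key union formula
  have hkey : ∀ B : Finset (Fin k), B.Nonempty →
      (ℙ (T ∩ ⋃ i ∈ B, E i)).toReal = a + ∑ i ∈ B, q i := by
    intro B hB
    induction B using Finset.induction_on with
    | empty => exact absurd hB (by simp)
    | @insert j B hj ih =>
        rcases B.eq_empty_or_nonempty with rfl | hBne
        · simp [hqdef]
        · have hU : (⋃ i ∈ insert j B, E i) = E j ∪ ⋃ i ∈ B, E i := by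
            simp [Set.biUnion_insert]
          have hmeasU : MeasurableSet (⋃ i ∈ B, E i) :=
            (B : Finset (Fin k)).measurableSet_biUnion (fun i _ => hE i)
          have hsplit : T ∩ (E j ∪ ⋃ i ∈ B, E i) = (T ∩ E j) ∪ (T ∩ ⋃ i ∈ B, E i) :=
            Set.inter_union_distrib_left T _ _
          have hinter : (T ∩ E j) ∩ (T ∩ ⋃ i ∈ B, E i) = T ∩ ((⋃ i ∈ B, E i) ∩ E j) := by
            ext x; simp only [Set.mem_inter_iff, Set.mem_iUnion]; tauto
          have hmui := measure_union_add_inter (μ := ℙ) (T ∩ E j) (hT.inter hmeasU)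
          rw [hinter, hcap B j hj hBne] at hmui
          have htr := congrArg ENNReal.toReal hmui
          rw [ENNReal.toReal_add (measure_ne_top _ _) (measure_ne_top _ _),
            ENNReal.toReal_add (measure_ne_top _ _) (measure_ne_top _ _)] at htr
          have hihv := ih hBne
          rw [hU, hsplit]
          rw [Finset.sum_insert hj]
          have : q j = (ℙ (T ∩ E j)).toReal - a := rfl
          rw [hihv] at htr
          rw [← hadef] at htr
          linarith
  -- final assembly
  have hlog := log_alt_sum_nonpos (Finset.univ : Finset (Fin k)) q (fun i _ => hq i) a ha ha1
  have hfilter : (Finset.univ : Finset (Fin k)).powerset.filter (fun B => ¬ B.Nonempty) = {∅} := by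
    ext B
    simp [Finset.not_nonempty_iff_eq_empty]
  have hsplit := Finset.sum_filter_add_sum_filter_not (Finset.univ : Finset (Fin k)).powerset
      Finset.Nonempty (fun B => (-1 : ℝ) ^ B.card * Real.log (a + ∑ i ∈ B, q i))
  rw [hfilter, Finset.sum_singleton] at hsplit
  simp only [Finset.card_empty, pow_zero, Finset.sum_empty, add_zero, one_mul] at hsplit
  have hX : ∑ B ∈ (Finset.univ : Finset (Fin k)).powerset.filter Finset.Nonempty,
      (-1 : ℝ) ^ B.card * Real.log (a + ∑ i ∈ B, q i) + Real.log a ≤ 0 := by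
    rw [hsplit]; exact hlog
  have hlog2 : 0 < Real.log 2 := Real.log_pos (by norm_num)
  have hterm : ∀ B ∈ (Finset.univ : Finset (Fin k)).powerset.filter Finset.Nonempty,
      (-1 : ℝ) ^ (B.card - 1) * logb 2 (ℙ (T ∩ ⋃ i ∈ B, E i)).toReal
      = -((-1 : ℝ) ^ B.card * Real.log (a + ∑ i ∈ B, q i)) / Real.log 2 := by
    intro B hB
    have hBne : B.Nonempty := (Finset.mem_filter.1 hB).2
    rw [hkey B hBne, Real.logb]
    obtain ⟨c, hc⟩ : ∃ c, B.card = c + 1 :=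
      ⟨B.card - 1, (Nat.succ_pred_eq_of_pos hBne.card_pos).symm⟩
    rw [hc]
    simp only [Nat.add_sub_cancel, pow_succ]
    ring
  rw [Finset.sum_congr rfl hterm]
  rw [← Finset.sum_div, Finset.sum_neg_distrib, Real.logb]
  have heq : -(Real.log a / Real.log 2) +
      (-(∑ B ∈ (Finset.univ : Finset (Fin k)).powerset.filter Finset.Nonempty,
        (-1 : ℝ) ^ B.card * Real.log (a + ∑ i ∈ B, q i))) / Real.log 2
      = -(∑ B ∈ (Finset.univ : Finset (Fin k)).powerset.filter Finset.Nonempty,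
        (-1 : ℝ) ^ B.card * Real.log (a + ∑ i ∈ B, q i) + Real.log a) / Real.log 2 := by
    ring
  rw [heq]
  apply div_nonneg _ hlog2.le
  linarith
end

section
/- Let d ≥ 0 and δ ≥ 0 be real numbers. Then the function x ↦ log(1 + d/x) − log(1 + d/(x + δ)) is convex on the open interval (0, ∞). -/
open Set Real

theorem convexity_of_log_increment_difference
    (d δ : ℝ) (hd : 0 ≤ d) (hδ : 0 ≤ δ) :
    ConvexOn ℝ (Set.Ioi (0 : ℝ))
      (fun x => Real.log (1 + d / x) - Real.log (1 + d / (x + δ))) := by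
  set G : ℝ → ℝ := fun x => (Real.log (x + d) - Real.log x) -
      (Real.log (x + d + δ) - Real.log (x + δ)) with hG
  set G1 : ℝ → ℝ := fun x => ((x + d)⁻¹ - x⁻¹) - ((x + d + δ)⁻¹ - (x + δ)⁻¹) with hG1
  set G2 : ℝ → ℝ := fun x =>
      (-(((x + d) ^ 2)⁻¹ - (x ^ 2)⁻¹)) - (-(((x + d + δ) ^ 2)⁻¹ - ((x + δ) ^ 2)⁻¹)) with hG2
  have pos : ∀ x ∈ Ioi (0:ℝ), 0 < x ∧ 0 < x + d ∧ 0 < x + δ ∧ 0 < x + d + δ := by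
    intro x hx
    have hx : 0 < x := hx
    exact ⟨hx, by linarith, by linarith, by linarith⟩
  have hD1 : ∀ x ∈ Ioi (0:ℝ), HasDerivAt G (G1 x) x := by
    intro x hx
    obtain ⟨h1, h2, h3, h4⟩ := pos x hx
    have d1 : HasDerivAt (fun y : ℝ => Real.log (y + d)) (x + d)⁻¹ x := by
      simpa using (((hasDerivAt_id x).add_const d).log h2.ne')
    have d2 : HasDerivAt Real.log x⁻¹ x := Real.hasDerivAt_log h1.ne'
    have d3 : HasDerivAt (fun y : ℝ => Real.log (y + d + δ)) (x + d + δ)⁻¹ x := by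
      simpa using ((((hasDerivAt_id x).add_const d).add_const δ).log h4.ne')
    have d4 : HasDerivAt (fun y : ℝ => Real.log (y + δ)) (x + δ)⁻¹ x := by
      simpa using (((hasDerivAt_id x).add_const δ).log h3.ne')
    exact (d1.sub d2).sub (d3.sub d4)
  have hD2 : ∀ x ∈ Ioi (0:ℝ), HasDerivAt G1 (G2 x) x := by
    intro x hx
    obtain ⟨h1, h2, h3, h4⟩ := pos x hx
    have d1 : HasDerivAt (fun y : ℝ => (y + d)⁻¹) (-1 / (x + d) ^ 2) x := by
      simpa [Pi.inv_def] using (((hasDerivAt_id x).add_const d).inv h2.ne')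
    have d2 : HasDerivAt (fun y : ℝ => y⁻¹) (-1 / x ^ 2) x := by
      simpa [Pi.inv_def] using ((hasDerivAt_id x).inv h1.ne')
    have d3 : HasDerivAt (fun y : ℝ => (y + d + δ)⁻¹) (-1 / (x + d + δ) ^ 2) x := by
      simpa [Pi.inv_def] using ((((hasDerivAt_id x).add_const d).add_const δ).inv h4.ne')
    have d4 : HasDerivAt (fun y : ℝ => (y + δ)⁻¹) (-1 / (x + δ) ^ 2) x := by
      simpa [Pi.inv_def] using (((hasDerivAt_id x).add_const δ).inv h3.ne')
    have : HasDerivAt G1 (-1 / (x + d) ^ 2 - -1 / x ^ 2 - (-1 / (x + d + δ) ^ 2 - -1 / (x + δ) ^ 2)) x :=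
      (d1.sub d2).sub (d3.sub d4)
    convert this using 1
    simp only [hG2]
    field_simp
    ring
  have hOpen : IsOpen (Ioi (0:ℝ)) := isOpen_Ioi
  have hEq : Set.EqOn (deriv G) G1 (Ioi (0:ℝ)) := fun x hx => (hD1 x hx).deriv
  have hG2nonneg : ∀ x ∈ Ioi (0:ℝ), 0 ≤ G2 x := by
    intro x hx
    obtain ⟨h1, h2, h3, h4⟩ := pos x hx
    set A := x
    set B := x + d with hB
    have hA : 0 < A := h1
    have hBpos : 0 < B := h2
    have hAB : A ≤ B := by simp [hB]; linarith
    have hA2 : 0 < A * (A + δ) := by positivity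
    have hB2 : 0 < B * (B + δ) := by positivity
    have k1 : A * (A + δ) ≤ B * (B + δ) := by nlinarith
    have k2 : (2 * B + δ) * (A * (A + δ)) ≤ (2 * A + δ) * (B * (B + δ)) := by
      nlinarith [mul_nonneg (mul_nonneg hA.le hBpos.le) (sub_nonneg.mpr hAB),
        mul_nonneg (mul_nonneg hδ (by linarith : (0:ℝ) ≤ A + B)) (sub_nonneg.mpr hAB),
        mul_nonneg (mul_nonneg hδ hδ) (sub_nonneg.mpr hAB)]
    have e1 : (A ^ 2)⁻¹ - ((A + δ) ^ 2)⁻¹ = δ * (2 * A + δ) / (A * (A + δ)) ^ 2 := by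
      field_simp
      ring
    have e2 : (B ^ 2)⁻¹ - ((B + δ) ^ 2)⁻¹ = δ * (2 * B + δ) / (B * (B + δ)) ^ 2 := by
      field_simp
      ring
    have key : δ * (2 * B + δ) / (B * (B + δ)) ^ 2 ≤ δ * (2 * A + δ) / (A * (A + δ)) ^ 2 := by
      rw [div_le_div_iff₀ (by positivity) (by positivity)]
      nlinarith [mul_le_mul_of_nonneg_left k1 (mul_nonneg hδ (by linarith : (0:ℝ) ≤ 2 * B + δ)),
        mul_le_mul_of_nonneg_right k2 hB2.le,
        mul_le_mul_of_nonneg_left k1 hδ]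
    have : (B ^ 2)⁻¹ - ((B + δ) ^ 2)⁻¹ ≤ (A ^ 2)⁻¹ - ((A + δ) ^ 2)⁻¹ := by
      rw [e1, e2]; exact key
    have hBδ : x + d + δ = B + δ := by ring
    simp only [hG2, hBδ]
    linarith
  have hConv : ConvexOn ℝ (Ioi (0:ℝ)) G := by
    refine convexOn_of_deriv2_nonneg' (convex_Ioi 0)
      (fun x hx => (hD1 x hx).differentiableAt.differentiableWithinAt)
      (fun x hx => ?_) (fun x hx => ?_)
    · have h : deriv G =ᶠ[nhds x] G1 :=
        Filter.eventuallyEq_of_mem (hOpen.mem_nhds hx) hEq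
      exact (h.differentiableAt_iff.mpr (hD2 x hx).differentiableAt).differentiableWithinAt
    · have h : deriv G =ᶠ[nhds x] G1 :=
        Filter.eventuallyEq_of_mem (hOpen.mem_nhds hx) hEq
      have : deriv^[2] G x = deriv (deriv G) x := rfl
      rw [this, h.deriv_eq, (hD2 x hx).deriv]
      exact hG2nonneg x hx
  refine hConv.congr fun x hx => ?_
  obtain ⟨h1, h2, h3, h4⟩ := pos x hx
  have e1 : 1 + d / x = (x + d) / x := by field_simp
  have e2 : 1 + d / (x + δ) = (x + d + δ) / (x + δ) := by field_simp; ring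
  simp only [hG, e1, e2, Real.log_div h2.ne' h1.ne', Real.log_div h4.ne' h3.ne']
end

section
/- Let d ≥ 0 and δ ≥ 0 be real numbers and let 0 < x ≤ y. Then log(1 + d/x) − log(1 + d/(x + δ)) ≥ log(1 + d/y) − log(1 + d/(y + δ)); i.e., the function x ↦ log(1 + d/x) − log(1 + d/(x + δ)) is nonincreasing on (0, ∞). -/
theorem log_increment_difference_antitone
    (d δ : ℝ) (hd : 0 ≤ d) (hδ : 0 ≤ δ)
    (x y : ℝ) (hx : 0 < x) (hxy : x ≤ y) :
    Real.log (1 + d / y) - Real.log (1 + d / (y + δ))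
      ≤ Real.log (1 + d / x) - Real.log (1 + d / (x + δ)) := by
  have hy : 0 < y := lt_of_lt_of_le hx hxy
  have hxδ : 0 < x + δ := by linarith
  have hyδ : 0 < y + δ := by linarith
  have p1 : 0 < 1 + d / x := by positivity
  have p2 : 0 < 1 + d / y := by positivity
  have p3 : 0 < 1 + d / (x + δ) := by positivity
  have p4 : 0 < 1 + d / (y + δ) := by positivity
  have key : (1 + d / y) * (1 + d / (x + δ)) ≤ (1 + d / x) * (1 + d / (y + δ)) := by
    have e1 : 1 + d / y = (y + d) / y := by field_simp
    have e2 : 1 + d / (x + δ) = (x + δ + d) / (x + δ) := by field_simp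
    have e3 : 1 + d / x = (x + d) / x := by field_simp
    have e4 : 1 + d / (y + δ) = (y + δ + d) / (y + δ) := by field_simp
    rw [e1, e2, e3, e4, div_mul_div_comm, div_mul_div_comm,
        div_le_div_iff₀ (by positivity) (by positivity)]
    nlinarith [mul_nonneg (mul_nonneg hd hδ) (mul_nonneg (sub_nonneg.2 hxy) (mul_pos hx hy).le),
      mul_nonneg (mul_nonneg (mul_nonneg hd hd) hδ) (sub_nonneg.2 hxy),
      mul_nonneg (mul_nonneg hd hδ) (mul_nonneg (sub_nonneg.2 hxy) hd),
      mul_nonneg (mul_nonneg (mul_nonneg hd hδ) hδ) (sub_nonneg.2 hxy),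
      mul_nonneg (mul_nonneg hd (sub_nonneg.2 hxy)) (mul_nonneg hδ (add_pos hx hy).le)]
  have hlog := Real.log_le_log (by positivity) key
  rw [Real.log_mul (ne_of_gt p2) (ne_of_gt p3), Real.log_mul (ne_of_gt p1) (ne_of_gt p4)] at hlog
  linarith
end

section
/- Let k ≥ 1, p > 0, and d₁, …, d_k ≥ 0. Then Σ_{B ⊆ {1,…,k}} (−1)^{|B|} log₂( p + Σ_{i∈B} d_i ) = − Σ_{B ⊆ {2,…,k}} (−1)^{|B|} log₂( (p + d₁ + Σ_{i∈B} d_i) / (p + Σ_{i∈B} d_i) ). Hence the partial information atom π₊ˢˣ(α) admits the closed form π₊ˢˣ(α) = Σ_{B ⊆ α⁻∖{γ₁}} (−1)^{|B|} log₂( (ℙ(⋀B) + d₁) / ℙ(⋀B) ), where ℙ(⋀B) = p + Σ_{γᵢ∈B} dᵢ. -/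
open Real

theorem atom_closed_form
    (k : ℕ) (hk : 1 ≤ k) (p : ℝ) (hp : 0 < p)
    (d : Fin k → ℝ) (hd : ∀ i, 0 ≤ d i) :
    ∑ B : Finset (Fin k), (-1 : ℝ) ^ B.card * logb 2 (p + ∑ i ∈ B, d i)
      = -∑ B ∈ (Finset.univ.erase (⟨0, hk⟩ : Fin k)).powerset,
          (-1 : ℝ) ^ B.card *
            logb 2 ((p + d ⟨0, hk⟩ + ∑ i ∈ B, d i) / (p + ∑ i ∈ B, d i)) := by
  set i0 : Fin k := ⟨0, hk⟩
  set s := Finset.univ.erase i0 with hs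
  have hi0 : i0 ∉ s := Finset.notMem_erase _ _
  have huniv : (Finset.univ : Finset (Fin k)) = insert i0 s := by
    rw [hs, Finset.insert_erase (Finset.mem_univ i0)]
  have hsum : ∀ B : Finset (Fin k), 0 ≤ ∑ i ∈ B, d i :=
    fun B => Finset.sum_nonneg fun i _ => hd i
  calc ∑ B : Finset (Fin k), (-1 : ℝ) ^ B.card * logb 2 (p + ∑ i ∈ B, d i)
      = ∑ B ∈ (insert i0 s).powerset,
          (-1 : ℝ) ^ B.card * logb 2 (p + ∑ i ∈ B, d i) := by
        rw [← Finset.powerset_univ, huniv]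
    _ = ∑ B ∈ s.powerset, (-1 : ℝ) ^ B.card * logb 2 (p + ∑ i ∈ B, d i)
        + ∑ B ∈ s.powerset,
            (-1 : ℝ) ^ (insert i0 B).card * logb 2 (p + ∑ i ∈ insert i0 B, d i) := by
        rw [Finset.sum_powerset_insert hi0]
    _ = -∑ B ∈ s.powerset,
          (-1 : ℝ) ^ B.card *
            logb 2 ((p + d i0 + ∑ i ∈ B, d i) / (p + ∑ i ∈ B, d i)) := by
        rw [← Finset.sum_add_distrib, ← Finset.sum_neg_distrib]
        apply Finset.sum_congr rfl
        intro B hB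
        have hBs : B ⊆ s := Finset.mem_powerset.mp hB
        have hi0B : i0 ∉ B := fun h => hi0 (hBs h)
        have hpos1 : 0 < p + ∑ i ∈ B, d i := by linarith [hsum B]
        have hpos2 : 0 < p + d i0 + ∑ i ∈ B, d i := by linarith [hsum B, hd i0]
        rw [Finset.card_insert_of_notMem hi0B, Finset.sum_insert hi0B,
          Real.logb_div (ne_of_gt hpos2) (ne_of_gt hpos1)]
        ring_nf
end
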